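/- The class of all strictly descending finite sequences of natural numbers forms a well-founded tree (closed under initial segments and with no infinite path), and the set coded by this tree under the recursive tree-decoding is the von Neumann ordinal ω. -/

import Mathlib

/-- `τ` is a daughter of `σ` in the tree `T`: it extends `σ` by one entry. -/
def Daughter {C : Type} (T : Set (List C)) (τ σ : List C) : Prop :=
  τ ∈ T ∧ ∃ c : C, τ = σ ++ [c]

/-- Decoding of the nodes of a well-founded tree: a node decodes to the set of
decodings of its daughters. -/
noncomputable def decode {C : Type} (T : Set (List C))
    (hwf : WellFounded (Daughter T)) : List C → PSet :=
  hwf.fix fun σ ih =>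
    PSet.mk {c : C // σ ++ [c] ∈ T} fun c => ih (σ ++ [c.1]) ⟨c.2, c.1, rfl⟩

/-- The tree of strictly descending finite sequences of natural numbers. -/
def descTree : Set (List ℕ) := {σ | σ.Chain' (· > ·)}

lemma mem_descTree_append {σ : List ℕ} {n c : ℕ} (h : σ.getLast? = some n) :
    σ ++ [c] ∈ descTree ↔ σ ∈ descTree ∧ c < n := by
  simp only [descTree, Set.mem_setOf_eq, List.Chain', List.isChain_append, List.isChain_singleton, true_and]
  constructor
  · rintro ⟨h1, h2⟩
    refine ⟨h1, h2 n h c rfl⟩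
  · rintro ⟨h1, h2⟩
    refine ⟨h1, fun x hx y hy => ?_⟩
    have hx' : x = n := by
      rw [h] at hx; exact (Option.mem_some_iff.1 hx).symm
    have hy' : y = c := (Option.mem_some_iff.1 hy).symm
    subst hx'; subst hy'; exact h2

lemma getLast?_concat' (σ : List ℕ) (c : ℕ) : (σ ++ [c]).getLast? = some c := by
  simp

lemma acc_of_getLast? : ∀ n : ℕ, ∀ σ : List ℕ, σ.getLast? = some n →
    Acc (Daughter descTree) σ := by
  intro n
  induction n using Nat.strong_induction_on with
  | _ n ih =>
    intro σ hσ
    constructor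
    rintro τ ⟨hτ, c, rfl⟩
    have hc : c < n := ((mem_descTree_append hσ).1 hτ).2
    exact ih c hc _ (getLast?_concat' σ c)

lemma descTree_wf : WellFounded (Daughter descTree) := by
  constructor
  intro σ
  match σ with
  | [] =>
    constructor
    rintro τ ⟨hτ, c, rfl⟩
    exact acc_of_getLast? c _ (by simp)
  | a :: l =>
    exact acc_of_getLast? ((a :: l).getLast (by simp)) _
      (List.getLast?_eq_getLast (l := a :: l) (by simp))

lemma decode_eq {C : Type} (T : Set (List C)) (hwf : WellFounded (Daughter T))
    (σ : List C) :
    decode T hwf σ =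
      PSet.mk {c : C // σ ++ [c] ∈ T} fun c => decode T hwf (σ ++ [c.1]) := by
  rw [decode, WellFounded.fix_eq]

lemma mem_mk_decode {C : Type} {T : Set (List C)} {hwf : WellFounded (Daughter T)}
    {σ : List C} {x : ZFSet} :
    x ∈ ZFSet.mk (decode T hwf σ) ↔
      ∃ c : C, σ ++ [c] ∈ T ∧ x = ZFSet.mk (decode T hwf (σ ++ [c])) := by
  induction x using Quotient.inductionOn with
  | h x =>
    show ZFSet.mk x ∈ _ ↔ ∃ c : C, σ ++ [c] ∈ T ∧ ZFSet.mk x = _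
    rw [decode_eq, ZFSet.mk_mem_iff]
    constructor
    · rintro ⟨⟨c, hc⟩, he⟩
      exact ⟨c, hc, ZFSet.sound he⟩
    · rintro ⟨c, hc, he⟩
      exact ⟨⟨c, hc⟩, ZFSet.exact he⟩

lemma mem_mk_ofNat {x : ZFSet} : ∀ {n : ℕ},
    x ∈ ZFSet.mk (PSet.ofNat n) ↔ ∃ c < n, x = ZFSet.mk (PSet.ofNat c) := by
  intro n
  induction n with
  | zero =>
    simp only [PSet.ofNat]
    constructor
    · intro h
      induction x using Quotient.inductionOn with
      | h x => exact absurd (ZFSet.mk_mem_iff.1 h) (by rintro ⟨⟨⟩, _⟩)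
    · rintro ⟨c, hc, _⟩; omega
  | succ n ih =>
    show x ∈ ZFSet.mk (PSet.insert _ _) ↔ _
    have : ZFSet.mk (PSet.insert (PSet.ofNat n) (PSet.ofNat n)) =
        insert (ZFSet.mk (PSet.ofNat n)) (ZFSet.mk (PSet.ofNat n)) := rfl
    rw [this, ZFSet.mem_insert_iff, ih]
    constructor
    · rintro (rfl | ⟨c, hc, rfl⟩)
      · exact ⟨n, Nat.lt_succ_self n, rfl⟩
      · exact ⟨c, hc.trans (Nat.lt_succ_self n), rfl⟩
    · rintro ⟨c, hc, rfl⟩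
      rcases Nat.lt_succ_iff_lt_or_eq.1 hc with h | rfl
      · exact Or.inr ⟨c, h, rfl⟩
      · exact Or.inl rfl

lemma mem_omega_iff {x : ZFSet} :
    x ∈ ZFSet.omega ↔ ∃ n : ℕ, x = ZFSet.mk (PSet.ofNat n) := by
  induction x using Quotient.inductionOn with
  | h x =>
    show ZFSet.mk x ∈ _ ↔ ∃ n : ℕ, ZFSet.mk x = _
    rw [ZFSet.omega, ZFSet.mk_mem_iff]
    constructor
    · rintro ⟨⟨n⟩, he⟩; exact ⟨n, ZFSet.sound he⟩
    · rintro ⟨n, he⟩; exact ⟨⟨n⟩, ZFSet.exact he⟩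

lemma decode_getLast (hwf : WellFounded (Daughter descTree)) :
    ∀ n : ℕ, ∀ σ : List ℕ, σ ∈ descTree → σ.getLast? = some n →
      ZFSet.mk (decode descTree hwf σ) = ZFSet.mk (PSet.ofNat n) := by
  intro n
  induction n using Nat.strong_induction_on with
  | _ n ih =>
    intro σ hσ hlast
    apply ZFSet.ext
    intro x
    rw [mem_mk_decode, mem_mk_ofNat]
    constructor
    · rintro ⟨c, hc, rfl⟩
      have hcn : c < n := ((mem_descTree_append hlast).1 hc).2
      exact ⟨c, hcn, ih c hcn _ hc (getLast?_concat' σ c)⟩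
    · rintro ⟨c, hc, rfl⟩
      have hmem : σ ++ [c] ∈ descTree := (mem_descTree_append hlast).2 ⟨hσ, hc⟩
      exact ⟨c, hmem, (ih c hc _ hmem (getLast?_concat' σ c)).symm⟩

/-- The tree of strictly descending sequences of naturals is well founded (has no
infinite path), and its root decodes to the von Neumann ordinal `ω`. -/
theorem descTree_wf_and_decodes_omega :
    WellFounded (Daughter descTree) ∧
      ∀ hwf : WellFounded (Daughter descTree),
        ZFSet.mk (decode descTree hwf []) = ZFSet.omega := by
  refine ⟨descTree_wf, fun hwf => ?_⟩
  apply ZFSet.ext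
  intro x
  rw [mem_mk_decode, mem_omega_iff]
  constructor
  · rintro ⟨c, hc, rfl⟩
    exact ⟨c, decode_getLast hwf c [c] hc rfl⟩
  · rintro ⟨n, rfl⟩
    have hmem : [] ++ [n] ∈ descTree := by simp [descTree, List.Chain']
    exact ⟨n, hmem, (decode_getLast hwf n [n] hmem rfl).symm⟩
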